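/- arXiv:1912.01270 — 4 statements merged into one kernel-verified Lean document; each statement's English description precedes it below -/
import Mathlib

section
/- For the white-noise BB84 family of correlations defined by p(x1,b|x0,y) = (1 + (-1)^{x1⊕b⊕(x0·y)} δ_{x0,y} V)/4 with 0 < V ≤ 1, the nonlinear witness Q, defined as the absolute value of the determinant of the 2×2 matrix with entries Q_{y,x0} = p(0|0;x0,y) − p(0|1;x0,y) where p(b|x1;x0,y) = p(x1,b|x0,y)/p(x1|x0), equals V². -/
noncomputable def bb84Box (V : ℝ) (x1 b x0 y : Fin 2) : ℝ :=
  (1 + (-1 : ℝ) ^ ((x1 : ℕ) + (b : ℕ) + (x0 : ℕ) * (y : ℕ)) *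
      (if x0 = y then 1 else 0) * V) / 4

noncomputable def bb84Cond (V : ℝ) (b x1 x0 y : Fin 2) : ℝ :=
  bb84Box V x1 b x0 y / ∑ b' : Fin 2, bb84Box V x1 b' x0 y

noncomputable def Qwitness (pc : Fin 2 → Fin 2 → Fin 2 → Fin 2 → ℝ) : ℝ :=
  |(pc 0 0 0 0 - pc 0 1 0 0) * (pc 0 0 1 1 - pc 0 1 1 1) -
    (pc 0 0 1 0 - pc 0 1 1 0) * (pc 0 0 0 1 - pc 0 1 0 1)|

theorem bb84_witness_eq_V_sq (V : ℝ) (hV0 : 0 < V) (hV1 : V ≤ 1) :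
    Qwitness (bb84Cond V) = V ^ 2 := by
  have hsum : ∀ x1 x0 y : Fin 2, (∑ b' : Fin 2, bb84Box V x1 b' x0 y) = 1/2 := by
    intro x1 x0 y
    fin_cases x1 <;> fin_cases x0 <;> fin_cases y <;>
      simp [bb84Box, Fin.sum_univ_two] <;> ring
  have h : ∀ b x1 x0 y : Fin 2, bb84Cond V b x1 x0 y = 2 * bb84Box V x1 b x0 y := by
    intro b x1 x0 y; rw [bb84Cond, hsum]; ring
  unfold Qwitness
  simp only [h, bb84Box]
  norm_num
  rw [← abs_mul, abs_eq (by positivity)]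
  right; ring
end

section
/- Let ρ_CQ = Σ_{i∈{0,1}} p_i |i⟩⟨i| ⊗ χ_i be a two-qubit classical-quantum state (orthonormal {|i⟩}, arbitrary qubit states χ_i, p_0 + p_1 = 1, p_i ≥ 0). For any POVMs {M_{x1|x0}} on Alice's qubit and {M_{b|y}} on Bob's qubit (x0, x1, y, b ∈ {0,1}), the witness Q computed from the conditional probabilities p(b|x1;x0,y) = Tr((M_{x1|x0}⊗M_{b|y})ρ_CQ)/Tr((M_{x1|x0}⊗I)ρ_CQ) equals 0. -/
open Matrix Kronecker ComplexOrder

/-- Rank-one projector |v⟩⟨v| on ℂ². -/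
def proj (v : Fin 2 → ℂ) : Matrix (Fin 2) (Fin 2) ℂ :=
  fun k l => v k * star (v l)

lemma proj_isHermitian (v : Fin 2 → ℂ) : (proj v).IsHermitian := by
  ext k l
  simp [proj, Matrix.conjTranspose_apply, mul_comm]

lemma herm_trace_re (M N : Matrix (Fin 2) (Fin 2) ℂ)
    (hM : M.IsHermitian) (hN : N.IsHermitian) :
    (((M * N).trace.re : ℝ) : ℂ) = (M * N).trace := by
  have h : (starRingEnd ℂ) ((M * N).trace) = (M * N).trace := by
    have : (M * N)ᴴ.trace = star ((M * N).trace) := Matrix.trace_conjTranspose _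
    rw [Matrix.conjTranspose_mul, hM.eq, hN.eq, Matrix.trace_mul_comm] at this
    exact this.symm
  exact (Complex.conj_eq_iff_re.mp h)

lemma trace_kron_cq (p : Fin 2 → ℝ) (v : Fin 2 → Fin 2 → ℂ)
    (χ : Fin 2 → Matrix (Fin 2) (Fin 2) ℂ)
    (A B : Matrix (Fin 2) (Fin 2) ℂ) :
    ((A ⊗ₖ B) * (∑ i, (p i : ℂ) • (proj (v i) ⊗ₖ χ i))).trace =
      ∑ i, (p i : ℂ) * (A * proj (v i)).trace * (B * χ i).trace := by
  rw [Finset.mul_sum, Matrix.trace_sum]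
  refine Finset.sum_congr rfl fun i _ => ?_
  rw [Matrix.mul_smul, Matrix.trace_smul, ← Matrix.mul_kronecker_mul,
    Matrix.trace_kronecker]
  simp [mul_assoc]

theorem cq_state_witness_vanishes
    (p : Fin 2 → ℝ) (hp : ∀ i, 0 ≤ p i) (hp1 : p 0 + p 1 = 1)
    (v : Fin 2 → Fin 2 → ℂ)
    (hortho : ∀ i j, ∑ k, star (v i k) * v j k = if i = j then 1 else 0)
    (χ : Fin 2 → Matrix (Fin 2) (Fin 2) ℂ)
    (hχpsd : ∀ i, (χ i).PosSemidef) (hχtr : ∀ i, Matrix.trace (χ i) = 1)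
    (ρCQ : Matrix (Fin 2 × Fin 2) (Fin 2 × Fin 2) ℂ)
    (hρ : ρCQ = ∑ i, (p i : ℂ) • (proj (v i) ⊗ₖ χ i))
    (MA : Fin 2 → Fin 2 → Matrix (Fin 2) (Fin 2) ℂ)  -- MA x0 x1 = M_{x1|x0}
    (hMApsd : ∀ x0 x1, (MA x0 x1).PosSemidef)
    (hMAsum : ∀ x0, MA x0 0 + MA x0 1 = 1)
    (MB : Fin 2 → Fin 2 → Matrix (Fin 2) (Fin 2) ℂ)  -- MB y b = M_{b|y}
    (hMBpsd : ∀ y b, (MB y b).PosSemidef)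
    (hMBsum : ∀ y, MB y 0 + MB y 1 = 1)
    (hden : ∀ x0 x1, (Matrix.trace ((MA x0 x1 ⊗ₖ (1 : Matrix (Fin 2) (Fin 2) ℂ)) * ρCQ)).re ≠ 0)
    (pc : Fin 2 → Fin 2 → Fin 2 → Fin 2 → ℝ)
    (hpc : ∀ b x1 x0 y, pc b x1 x0 y =
      (Matrix.trace ((MA x0 x1 ⊗ₖ MB y b) * ρCQ)).re /
        (Matrix.trace ((MA x0 x1 ⊗ₖ (1 : Matrix (Fin 2) (Fin 2) ℂ)) * ρCQ)).re) :
    Qwitness pc = 0 := by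
  set tA : Fin 2 → Fin 2 → Fin 2 → ℝ :=
    fun x0 x1 i => ((MA x0 x1 * proj (v i)).trace).re with htA
  set tB : Fin 2 → Fin 2 → Fin 2 → ℝ :=
    fun y b i => ((MB y b * χ i).trace).re with htB
  have hA : ∀ x0 x1 i, ((tA x0 x1 i : ℝ) : ℂ) = (MA x0 x1 * proj (v i)).trace :=
    fun x0 x1 i => herm_trace_re _ _ (hMApsd x0 x1).1 (proj_isHermitian (v i))
  have hB : ∀ y b i, ((tB y b i : ℝ) : ℂ) = (MB y b * χ i).trace :=
    fun y b i => herm_trace_re _ _ (hMBpsd y b).1 (hχpsd i).1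
  have htrAB : ∀ x0 x1 y b, ((MA x0 x1 ⊗ₖ MB y b) * ρCQ).trace.re =
      p 0 * tA x0 x1 0 * tB y b 0 + p 1 * tA x0 x1 1 * tB y b 1 := by
    intro x0 x1 y b
    have : ((MA x0 x1 ⊗ₖ MB y b) * ρCQ).trace =
        ((p 0 * tA x0 x1 0 * tB y b 0 + p 1 * tA x0 x1 1 * tB y b 1 : ℝ) : ℂ) := by
      rw [hρ, trace_kron_cq, Fin.sum_univ_two, ← hA, ← hA, ← hB, ← hB]
      push_cast
      ring
    rw [this, Complex.ofReal_re]
  have htr1 : ∀ x0 x1, ((MA x0 x1 ⊗ₖ (1 : Matrix (Fin 2) (Fin 2) ℂ)) * ρCQ).trace.re =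
      p 0 * tA x0 x1 0 + p 1 * tA x0 x1 1 := by
    intro x0 x1
    have : ((MA x0 x1 ⊗ₖ (1 : Matrix (Fin 2) (Fin 2) ℂ)) * ρCQ).trace =
        ((p 0 * tA x0 x1 0 + p 1 * tA x0 x1 1 : ℝ) : ℂ) := by
      rw [hρ, trace_kron_cq, Fin.sum_univ_two]
      simp only [Matrix.one_mul, hχtr]
      rw [← hA, ← hA]
      push_cast
      ring
    rw [this, Complex.ofReal_re]
  have hd : ∀ x0 x1, p 0 * tA x0 x1 0 + p 1 * tA x0 x1 1 ≠ 0 := by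
    intro x0 x1
    have := hden x0 x1
    rwa [htr1] at this
  unfold Qwitness
  simp only [hpc, htrAB, htr1]
  rw [abs_eq_zero]
  field_simp [hd 0 0, hd 0 1, hd 1 0, hd 1 1]
  ring
end

section
/- Let ρ_QC = Σ_{j∈{0,1}} p_j φ_j ⊗ |j⟩⟨j| be a two-qubit quantum-classical state. For any qubit POVMs {M_{x1|x0}} for Alice and {M_{b|y}} for Bob, the witness Q computed from p(b|x1;x0,y) = Tr((M_{x1|x0}⊗M_{b|y})ρ_QC)/Tr((M_{x1|x0}⊗I)ρ_QC) equals 0. -/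
open Matrix Kronecker ComplexOrder

lemma herm_trace_re_s6 (X Y : Matrix (Fin 2) (Fin 2) ℂ) (hX : X.IsHermitian)
    (hY : Y.IsHermitian) :
    Matrix.trace (X * Y) = ((Matrix.trace (X * Y)).re : ℂ) := by
  have h : star (Matrix.trace (X * Y)) = Matrix.trace (X * Y) := by
    rw [← Matrix.trace_conjTranspose, Matrix.conjTranspose_mul, hX.eq, hY.eq,
      Matrix.trace_mul_comm]
  exact (Complex.conj_eq_iff_re.mp h).symm

theorem qc_state_witness_vanishes
    (p : Fin 2 → ℝ) (hp : ∀ i, 0 ≤ p i) (hp1 : p 0 + p 1 = 1)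
    (v : Fin 2 → Fin 2 → ℂ)
    (hortho : ∀ i j, ∑ k, star (v i k) * v j k = if i = j then 1 else 0)
    (φ : Fin 2 → Matrix (Fin 2) (Fin 2) ℂ)
    (hφpsd : ∀ i, (φ i).PosSemidef) (hφtr : ∀ i, Matrix.trace (φ i) = 1)
    (ρQC : Matrix (Fin 2 × Fin 2) (Fin 2 × Fin 2) ℂ)
    (hρ : ρQC = ∑ j, (p j : ℂ) • (φ j ⊗ₖ proj (v j)))
    (MA : Fin 2 → Fin 2 → Matrix (Fin 2) (Fin 2) ℂ)  -- MA x0 x1 = M_{x1|x0}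
    (hMApsd : ∀ x0 x1, (MA x0 x1).PosSemidef)
    (hMAsum : ∀ x0, MA x0 0 + MA x0 1 = 1)
    (MB : Fin 2 → Fin 2 → Matrix (Fin 2) (Fin 2) ℂ)  -- MB y b = M_{b|y}
    (hMBpsd : ∀ y b, (MB y b).PosSemidef)
    (hMBsum : ∀ y, MB y 0 + MB y 1 = 1)
    (hden : ∀ x0 x1, (Matrix.trace ((MA x0 x1 ⊗ₖ (1 : Matrix (Fin 2) (Fin 2) ℂ)) * ρQC)).re ≠ 0)
    (pc : Fin 2 → Fin 2 → Fin 2 → Fin 2 → ℝ)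
    (hpc : ∀ b x1 x0 y, pc b x1 x0 y =
      (Matrix.trace ((MA x0 x1 ⊗ₖ MB y b) * ρQC)).re /
        (Matrix.trace ((MA x0 x1 ⊗ₖ (1 : Matrix (Fin 2) (Fin 2) ℂ)) * ρQC)).re) :
    Qwitness pc = 0 := by
  -- real-valued traces
  set a : Fin 2 → Fin 2 → Fin 2 → ℝ :=
    fun x0 x1 j => (Matrix.trace (MA x0 x1 * φ j)).re with ha
  set c : Fin 2 → Fin 2 → ℝ :=
    fun y j => (Matrix.trace (MB y 0 * proj (v j))).re with hc
  have hA : ∀ x0 x1 j, Matrix.trace (MA x0 x1 * φ j) = (a x0 x1 j : ℂ) :=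
    fun x0 x1 j => herm_trace_re_s6 _ _ (hMApsd x0 x1).1 (hφpsd j).1
  have hC : ∀ y j, Matrix.trace (MB y 0 * proj (v j)) = (c y j : ℂ) :=
    fun y j => herm_trace_re_s6 _ _ (hMBpsd y 0).1 (proj_isHermitian (v j))
  have htrproj : ∀ j, Matrix.trace (proj (v j)) = 1 := by
    intro j
    have h := hortho j j
    simp only [if_pos rfl] at h
    rw [Matrix.trace]
    simpa [Matrix.diag, proj, mul_comm] using h
  have key : ∀ (A B : Matrix (Fin 2) (Fin 2) ℂ),
      Matrix.trace ((A ⊗ₖ B) * ρQC) =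
        ∑ j, (p j : ℂ) * (Matrix.trace (A * φ j) * Matrix.trace (B * proj (v j))) := by
    intro A B
    rw [hρ, Finset.mul_sum, Matrix.trace_sum]
    refine Finset.sum_congr rfl fun j _ => ?_
    rw [Matrix.mul_smul, Matrix.trace_smul, ← Matrix.mul_kronecker_mul,
      Matrix.trace_kronecker, smul_eq_mul]
  have hdenval : ∀ x0 x1,
      (Matrix.trace ((MA x0 x1 ⊗ₖ (1 : Matrix (Fin 2) (Fin 2) ℂ)) * ρQC)).re =
        p 0 * a x0 x1 0 + p 1 * a x0 x1 1 := by
    intro x0 x1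
    rw [key]
    simp [Fin.sum_univ_two, hA, Matrix.one_mul, htrproj]
  have hnumval : ∀ y x0 x1,
      (Matrix.trace ((MA x0 x1 ⊗ₖ MB y 0) * ρQC)).re =
        p 0 * a x0 x1 0 * c y 0 + p 1 * a x0 x1 1 * c y 1 := by
    intro y x0 x1
    rw [key]
    simp [Fin.sum_univ_two, hA, hC]
    push_cast
    simp [mul_assoc]
  have hd : ∀ x0 x1, p 0 * a x0 x1 0 + p 1 * a x0 x1 1 ≠ 0 := by
    intro x0 x1
    have := hden x0 x1
    rwa [hdenval x0 x1] at this
  have hpc' : ∀ x1 x0 y, pc 0 x1 x0 y =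
      (p 0 * a x0 x1 0 * c y 0 + p 1 * a x0 x1 1 * c y 1) /
        (p 0 * a x0 x1 0 + p 1 * a x0 x1 1) := by
    intro x1 x0 y
    rw [hpc, hnumval, hdenval]
  unfold Qwitness
  rw [hpc', hpc', hpc', hpc', hpc', hpc', hpc', hpc']
  rw [abs_eq_zero]
  field_simp [hd 0 0, hd 0 1, hd 1 0, hd 1 1]
  ring
end

section
/- In the 2-to-1 random access code with a classical bit: for any encoding function E: {0,1}² → {0,1} and decoding functions D_y: {0,1} → {0,1} (y ∈ {0,1}), possibly randomized by shared randomness, the average success probability P_B = (1/8) Σ_{x0,x1,y} Pr[D_y(E(x0,x1)) = x_y] is at most 3/4. -/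
lemma rac_det_bound (E : Fin 2 → Fin 2 → Fin 2) (D : Fin 2 → Fin 2 → Fin 2) :
    (∑ x0 : Fin 2, ∑ x1 : Fin 2, ∑ y : Fin 2,
      if D y (E x0 x1) = (if y = 0 then x0 else x1) then 1 else 0 : ℕ) ≤ 6 := by
  revert E D; decide

theorem rac_classical_bound (Λ : Type) [Fintype Λ] (w : Λ → ℝ)
    (hw : ∀ l, 0 ≤ w l) (hw1 : ∑ l, w l = 1)
    (E : Λ → Fin 2 → Fin 2 → Fin 2)       -- encoding (possibly depending on shared randomness)
    (D : Λ → Fin 2 → Fin 2 → Fin 2) :     -- decoding D l y : message ↦ guess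
    ∑ l, w l * ((1/8 : ℝ) * ∑ x0 : Fin 2, ∑ x1 : Fin 2, ∑ y : Fin 2,
      if D l y (E l x0 x1) = (if y = 0 then x0 else x1) then 1 else 0) ≤ 3/4 := by
  calc ∑ l, w l * ((1/8 : ℝ) * ∑ x0 : Fin 2, ∑ x1 : Fin 2, ∑ y : Fin 2,
      if D l y (E l x0 x1) = (if y = 0 then x0 else x1) then 1 else 0)
      ≤ ∑ l, w l * (3/4) := by
        apply Finset.sum_le_sum
        intro l _
        apply mul_le_mul_of_nonneg_left _ (hw l)
        have h := rac_det_bound (E l) (D l)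
        have : (∑ x0 : Fin 2, ∑ x1 : Fin 2, ∑ y : Fin 2,
            if D l y (E l x0 x1) = (if y = 0 then x0 else x1) then 1 else 0 : ℝ)
            = ((∑ x0 : Fin 2, ∑ x1 : Fin 2, ∑ y : Fin 2,
            if D l y (E l x0 x1) = (if y = 0 then x0 else x1) then 1 else 0 : ℕ) : ℝ) := by
          push_cast; rfl
        rw [this]
        have : ((∑ x0 : Fin 2, ∑ x1 : Fin 2, ∑ y : Fin 2,
            if D l y (E l x0 x1) = (if y = 0 then x0 else x1) then 1 else 0 : ℕ) : ℝ) ≤ 6 := by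
          exact_mod_cast h
        linarith
    _ = 3/4 := by rw [← Finset.sum_mul, hw1, one_mul]
end
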